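/- Let G be a finite connected simple graph, let H be a connected spanning subgraph of G, let (T,r) be a DFS tree of H rooted at r, and let k ≥ 1 be a natural number. Suppose that every edge of G that is not an edge of H has both endpoints in D_v for some vertex v of depth exactly k in (T,r), where D_v is the descendant set of v. Then there exists a DFS tree (T*, r) of G rooted at r such that every vertex of depth at most k in (T,r) has the same parent in T* as in T; in particular, T* agrees with T on the top k levels. -/

import Mathlib

/-- `u` lies on the unique path in `T` from `r` to `v`
(characterized in a tree via distances). -/
def IsAncestor {V : Type*} (T : SimpleGraph V) (r u v : V) : Prop :=
  T.dist r u + T.dist u v = T.dist r v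

/-- `u` and `v` are comparable in the rooted tree `(T, r)`. -/
def TreeComparable {V : Type*} (T : SimpleGraph V) (r u v : V) : Prop :=
  IsAncestor T r u v ∨ IsAncestor T r v u

/-- `(T, r)` is a DFS tree of `G`. -/
def IsDFSTree {V : Type*} (G T : SimpleGraph V) (r : V) : Prop :=
  T ≤ G ∧ T.IsTree ∧ ∀ u v : V, G.Adj u v → TreeComparable T r u v

open SimpleGraph Walk

section Lemmas

variable {V : Type*} {T : SimpleGraph V} {r u v w x y z a b c : V}

lemma anc_root : IsAncestor T r r v := by simp [IsAncestor]

lemma anc_refl : IsAncestor T r v v := by simp [IsAncestor]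

lemma IsAncestor.dist_le (h : IsAncestor T r u v) : T.dist r u ≤ T.dist r v := by
  unfold IsAncestor at h; omega

lemma anc_antisymm (hc : T.Connected) (h1 : IsAncestor T r u v)
    (h2 : IsAncestor T r v u) : u = v := by
  unfold IsAncestor at h1 h2
  have : T.dist u v = 0 := by omega
  exact (hc.dist_eq_zero_iff).1 this

lemma anc_trans (hc : T.Connected) (h1 : IsAncestor T r u v)
    (h2 : IsAncestor T r v w) : IsAncestor T r u w := by
  unfold IsAncestor at *
  have t1 : T.dist u w ≤ T.dist u v + T.dist v w := hc.dist_triangle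
  have t2 : T.dist r w ≤ T.dist r u + T.dist u w := hc.dist_triangle
  omega

lemma anc_of_mid (hc : T.Connected) (h : IsAncestor T r u w)
    (hx : T.dist u x + T.dist x w = T.dist u w) : IsAncestor T r u x := by
  unfold IsAncestor at *
  have t1 : T.dist r x ≤ T.dist r u + T.dist u x := hc.dist_triangle
  have t2 : T.dist r w ≤ T.dist r x + T.dist x w := hc.dist_triangle
  omega

lemma anc_root_eq (hc : T.Connected) (h : IsAncestor T r u r) : u = r :=
  anc_antisymm hc h anc_root

variable (hT : T.IsTree)
include hT

lemma path_length {p : T.Walk a b} (hp : p.IsPath) : p.length = T.dist a b := by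
  obtain ⟨q, hq, hql⟩ := hT.isConnected.exists_path_of_dist a b
  rw [(hT.existsUnique_path a b).unique hp hq, hql]

lemma split_dist {p : T.Walk a c} (hp : p.IsPath) (hb : b ∈ p.support) :
    T.dist a b + T.dist b c = T.dist a c := by
  classical
  have h1 := path_length hT (hp.takeUntil hb)
  have h2 := path_length hT (hp.dropUntil hb)
  have h3 := congrArg Walk.length (p.take_spec hb)
  rw [length_append] at h3
  have h4 := path_length hT hp
  omega

lemma mem_support_iff_anc {p : T.Walk r v} (hp : p.IsPath) :
    u ∈ p.support ↔ IsAncestor T r u v := by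
  constructor
  · exact fun h => split_dist hT hp h
  · intro h
    have hc := hT.isConnected
    obtain ⟨q1, hq1, hl1⟩ := hc.exists_path_of_dist r u
    obtain ⟨q2, hq2, hl2⟩ := hc.exists_path_of_dist u v
    have hW : (q1.append q2).IsPath := by
      rw [isPath_def, support_append, List.nodup_append]
      refine ⟨hq1.support_nodup, hq2.support_nodup.tail, ?_⟩
      intro x hx1 y hx2 hxy
      subst hxy
      have hx2' : x ∈ q2.support := List.mem_of_mem_tail hx2
      have s1 := split_dist hT hq1 hx1
      have s2 := split_dist hT hq2 hx2'
      have t : T.dist r v ≤ T.dist r x + T.dist x v := hc.dist_triangle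
      have hcm : T.dist u x = T.dist x u := dist_comm ..
      unfold IsAncestor at h
      have hxu : T.dist x u = 0 := by omega
      have : x = u := (hc.dist_eq_zero_iff).1 hxu
      subst this
      have := hq2.support_nodup
      rw [q2.support_eq_cons, List.nodup_cons] at this
      exact this.1 hx2
    have := (hT.existsUnique_path r v).unique hW hp
    rw [← this, mem_support_append_iff]
    exact Or.inl q1.end_mem_support

lemma depth_unique (h1 : IsAncestor T r a y) (h2 : IsAncestor T r b y)
    (hd : T.dist r a = T.dist r b) : a = b := by
  classical
  have hc := hT.isConnected
  obtain ⟨p, hp, _⟩ := hc.exists_path_of_dist r y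
  have ha : a ∈ p.support := (mem_support_iff_anc hT hp).2 h1
  have hb : b ∈ p.support := (mem_support_iff_anc hT hp).2 h2
  rw [← p.take_spec ha, mem_support_append_iff] at hb
  unfold IsAncestor at h1 h2
  rcases hb with hb | hb
  · have s := split_dist hT (hp.takeUntil ha) hb
    have : T.dist b a = 0 := by omega
    exact ((hc.dist_eq_zero_iff).1 this).symm
  · have s := split_dist hT (hp.dropUntil ha) hb
    have : T.dist a b = 0 := by omega
    exact (hc.dist_eq_zero_iff).1 this

lemma anc_of_anc_le (h1 : IsAncestor T r a y) (h2 : IsAncestor T r b y)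
    (hd : T.dist r a ≤ T.dist r b) : IsAncestor T r a b := by
  classical
  have hc := hT.isConnected
  obtain ⟨p, hp, _⟩ := hc.exists_path_of_dist r y
  have ha : a ∈ p.support := (mem_support_iff_anc hT hp).2 h1
  have hb : b ∈ p.support := (mem_support_iff_anc hT hp).2 h2
  rw [← p.take_spec ha, mem_support_append_iff] at hb
  unfold IsAncestor at *
  rcases hb with hb | hb
  · have s := split_dist hT (hp.takeUntil ha) hb
    have hba : T.dist b a = 0 := by omega
    have : b = a := (hc.dist_eq_zero_iff).1 hba
    subst this
    simp [dist_self]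
  · have s := split_dist hT (hp.dropUntil ha) hb
    omega

lemma exists_anc_at {m : ℕ} (hm : m ≤ T.dist r y) :
    ∃ v, T.dist r v = m ∧ IsAncestor T r v y := by
  have hc := hT.isConnected
  induction m with
  | zero => exact ⟨r, dist_self, anc_root⟩
  | succ m ih =>
    obtain ⟨v, hv, hanc⟩ := ih (by omega)
    have hvy : v ≠ y := by
      intro h; subst h; omega
    obtain ⟨q, hq, hql⟩ := hc.exists_path_of_dist v y
    have hnn : ¬ q.Nil := not_nil_of_ne hvy
    set c := q.getVert 1 with hcdef
    have hadj : T.Adj v c := q.adj_snd hnn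
    have htl : q.tail.length + 1 = q.length := length_tail_add_one hnn
    have hcy : T.dist c y ≤ q.tail.length := dist_le q.tail
    have hvc : T.dist v c = 1 := (dist_eq_one_iff_adj).2 hadj
    have t1 : T.dist v y ≤ T.dist v c + T.dist c y := hc.dist_triangle
    have hcyd : T.dist c y + 1 = T.dist v y := by omega
    have t2 : T.dist r y ≤ T.dist r c + T.dist c y := hc.dist_triangle
    have t3 : T.dist r c ≤ T.dist r v + T.dist v c := hc.dist_triangle
    unfold IsAncestor at hanc ⊢
    refine ⟨c, by omega, by omega⟩

lemma adj_parent (h : T.Adj z w) :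
    (IsAncestor T r z w ∧ T.dist r w = T.dist r z + 1) ∨
    (IsAncestor T r w z ∧ T.dist r z = T.dist r w + 1) := by
  have hc := hT.isConnected
  obtain ⟨p, hp, hpl⟩ := hc.exists_path_of_dist r z
  by_cases hw : w ∈ p.support
  · right
    have hanc : IsAncestor T r w z := (mem_support_iff_anc hT hp).1 hw
    have hwz : T.dist w z = 1 := (dist_eq_one_iff_adj).2 h.symm
    exact ⟨hanc, by unfold IsAncestor at hanc; omega⟩
  · left
    have hW : (p.append (Walk.cons h Walk.nil)).IsPath := by
      rw [isPath_def, support_append, List.nodup_append]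
      refine ⟨hp.support_nodup, by simp, ?_⟩
      intro x hx1 y hx2 hxy
      subst hxy
      simp at hx2
      subst hx2
      exact hw hx1
    have hanc : IsAncestor T r z w := by
      rw [← mem_support_iff_anc hT hW, mem_support_append_iff]
      exact Or.inl p.end_mem_support
    refine ⟨hanc, ?_⟩
    have hl := path_length hT hW
    rw [length_append] at hl
    simp at hl
    omega

lemma parent_unique (h1 : T.Adj a w) (ha : IsAncestor T r a w) (hna : a ≠ w)
    (h2 : T.Adj b w) (hb : IsAncestor T r b w) (hnb : b ≠ w) : a = b := by
  have hc := hT.isConnected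
  have hda : T.dist r w = T.dist r a + 1 := by
    rcases adj_parent hT h1 with ⟨_, hd⟩ | ⟨hanc, _⟩
    · exact hd
    · exact absurd (anc_antisymm hc ha hanc) hna
  have hdb : T.dist r w = T.dist r b + 1 := by
    rcases adj_parent hT h2 with ⟨_, hd⟩ | ⟨hanc, _⟩
    · exact hd
    · exact absurd (anc_antisymm hc hb hanc) hnb
  exact depth_unique hT ha hb (by omega)

lemma exists_parent (hne : w ≠ r) :
    ∃ p, T.Adj p w ∧ IsAncestor T r p w ∧ p ≠ w := by
  have hc := hT.isConnected
  obtain ⟨q, hq, _⟩ := hc.exists_path_of_dist r w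
  have hnn : ¬ q.reverse.Nil := not_nil_of_ne hne
  set p := q.reverse.getVert 1 with hpdef
  have hadj : T.Adj w p := q.reverse.adj_snd hnn
  have hmem : p ∈ q.support := by
    have : p ∈ q.reverse.support :=
      mem_support_iff_exists_getVert.2 ⟨1, rfl, by
        rw [not_nil_iff_lt_length] at hnn; omega⟩
    rwa [support_reverse, List.mem_reverse] at this
  exact ⟨p, hadj.symm, (mem_support_iff_anc hT hq).1 hmem, hadj.ne'⟩

end Lemmas

section Swap

open SimpleGraph Walk

lemma swap_lemma {V : Type*} {T2 : SimpleGraph V} {r u v : V}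
    (h2 : T2.IsTree) (huv : u ≠ v)
    (hnc1 : ¬ IsAncestor T2 r u v) (hnc2 : ¬ IsAncestor T2 r v u) :
    ∃ (T3 : SimpleGraph V) (p : V),
      T2.Adj p u ∧ IsAncestor T2 r p u ∧
      T3.edgeSet = insert s(u, v) (T2.edgeSet \ {s(p, u)}) ∧
      T3.IsTree ∧
      (∀ w, ¬ IsAncestor T2 r u w → T3.dist r w = T2.dist r w) ∧
      (∀ w, IsAncestor T2 r u w →
        T3.dist r w = T2.dist r v + 1 + T2.dist u w) := by
  classical
  have hc := h2.isConnected
  have hur : u ≠ r := fun h => hnc1 (h ▸ anc_root)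
  obtain ⟨P, hP, hPl⟩ := hc.exists_path_of_dist r u
  have hnn : ¬ P.reverse.Nil := not_nil_of_ne hur
  set p := P.reverse.getVert 1 with hpdef
  have hadj_up : T2.Adj u p := P.reverse.adj_snd hnn
  have hpmem : p ∈ P.support := by
    have : p ∈ P.reverse.support :=
      mem_support_iff_exists_getVert.2 ⟨1, rfl, by
        rw [not_nil_iff_lt_length] at hnn; omega⟩
    rwa [support_reverse, List.mem_reverse] at this
  have hpanc : IsAncestor T2 r p u := (mem_support_iff_anc h2 hP).1 hpmem
  have hpu : p ≠ u := hadj_up.ne'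
  have hsn : s(u, v) ∉ T2.edgeSet := by
    intro h
    rcases adj_parent h2 (T2.mem_edgeSet.1 h) with ⟨ha, _⟩ | ⟨ha, _⟩
    · exact hnc1 ha
    · exact hnc2 ha
  have hne_e : s(p, u) ≠ s(u, v) := by
    rw [Ne, Sym2.eq_iff]
    rintro (⟨h1, h2'⟩ | ⟨h1, _⟩)
    · exact hpu h1
    · exact hnc2 (h1 ▸ hpanc)
  set E3 : Set (Sym2 V) := insert s(u, v) (T2.edgeSet \ {s(p, u)}) with hE3def
  set T3 := SimpleGraph.fromEdgeSet E3 with hT3def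
  have hE3 : T3.edgeSet = E3 := by
    have hnd : ∀ e ∈ E3, ¬ e.IsDiag := by
      rintro e (rfl | ⟨he, _⟩)
      · simp [huv]
      · exact T2.not_isDiag_of_mem_edgeSet he
    rw [hT3def, edgeSet_fromEdgeSet]
    ext e
    simp only [Set.mem_diff, Set.mem_setOf_eq, and_iff_left_iff_imp]
    exact fun he => hnd e he
  have hT3adj : ∀ a b : V, T3.Adj a b ↔ s(a, b) ∈ E3 := by
    intro a b
    rw [← SimpleGraph.mem_edgeSet, hE3]
  have huvadj3 : T3.Adj u v := (hT3adj u v).2 (Set.mem_insert _ _)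
  -- the descendant set of u
  set D : Set V := {x | IsAncestor T2 r u x} with hDdef
  have huD : u ∈ D := anc_refl
  have hvD : v ∉ D := hnc1
  have hrD : r ∉ D := fun h => hur (anc_root_eq hc h)
  have hpD : p ∉ D := fun h => hpu (anc_antisymm hc hpanc h)
  have hbnd : ∀ a b : V, T2.Adj a b → b ∈ D → a ∉ D → b = u ∧ a = p := by
    intro a b hab hbD haD
    rcases adj_parent h2 hab with ⟨h1, hd1⟩ | ⟨h1, hd1⟩
    · by_cases hle : T2.dist r u ≤ T2.dist r a
      · exact absurd (anc_of_anc_le h2 hbD h1 hle) haD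
      · push_neg at hle
        have hub : T2.dist r u ≤ T2.dist r b := hbD.dist_le
        have hdu : T2.dist r u = T2.dist r b := by omega
        have hbu : b = u := (depth_unique h2 hbD anc_refl hdu).symm
        subst hbu
        have hau : a ≠ b := fun h => by subst h; omega
        exact ⟨rfl, parent_unique h2 hab h1 hau hadj_up.symm hpanc hpu⟩
    · exact absurd (anc_trans hc hbD h1) haD
  have hwalkD : ∀ (q : T2.Walk u v), s(p, u) ∈ q.edges := by
    intro q
    obtain ⟨d, hd, hdf, hds⟩ := q.exists_boundary_dart D huD hvD
    obtain ⟨h1, h2'⟩ := hbnd d.snd d.fst d.adj.symm hdf hds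
    have hde : d.edge ∈ q.edges := List.mem_map_of_mem hd
    have : d.edge = s(d.fst, d.snd) := rfl
    rw [this, h1, h2', Sym2.eq_swap] at hde
    exact hde
  -- paths in T3 to vertices outside D
  have hpath1 : ∀ x, x ∉ D → ∃ q : T3.Walk r x, q.IsPath ∧ q.length = T2.dist r x := by
    intro x hxD
    obtain ⟨Px, hPx, hPxl⟩ := hc.exists_path_of_dist r x
    have hu_not : u ∉ Px.support := fun h => hxD ((mem_support_iff_anc h2 hPx).1 h)
    have hedges : ∀ e ∈ Px.edges, e ∈ T3.edgeSet := by
      intro e he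
      rw [hE3]
      have h1 : e ∈ T2.edgeSet := Px.edges_subset_edgeSet he
      have h2' : e ≠ s(p, u) := by
        rintro rfl
        exact hu_not (Px.snd_mem_support_of_mem_edges he)
      exact Set.mem_insert_of_mem _ ⟨h1, h2'⟩
    exact ⟨Px.transfer T3 hedges, hPx.transfer hedges, by
      rw [length_transfer, hPxl]⟩
  have hpath2 : ∀ x, x ∈ D →
      ∃ q : T3.Walk r x, q.IsPath ∧ q.length = T2.dist r v + 1 + T2.dist u x := by
    intro x hxD
    obtain ⟨Q1, hQ1, hQ1l⟩ := hc.exists_path_of_dist r v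
    obtain ⟨Q2, hQ2, hQ2l⟩ := hc.exists_path_of_dist u x
    have hu_not : u ∉ Q1.support := fun h => hvD ((mem_support_iff_anc h2 hQ1).1 h)
    have hedges1 : ∀ e ∈ Q1.edges, e ∈ T3.edgeSet := by
      intro e he
      rw [hE3]
      have h1 : e ∈ T2.edgeSet := Q1.edges_subset_edgeSet he
      have h2' : e ≠ s(p, u) := by
        rintro rfl
        exact hu_not (Q1.snd_mem_support_of_mem_edges he)
      exact Set.mem_insert_of_mem _ ⟨h1, h2'⟩
    have hQ2D : ∀ y ∈ Q2.support, y ∈ D := by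
      intro y hy
      exact anc_of_mid hc hxD (split_dist h2 hQ2 hy)
    have hedges2 : ∀ e ∈ Q2.edges, e ∈ T3.edgeSet := by
      intro e he
      rw [hE3]
      have h1 : e ∈ T2.edgeSet := Q2.edges_subset_edgeSet he
      have h2' : e ≠ s(p, u) := by
        rintro rfl
        exact hpD (hQ2D p (Q2.fst_mem_support_of_mem_edges he))
      exact Set.mem_insert_of_mem _ ⟨h1, h2'⟩
    set Q1' := Q1.transfer T3 hedges1 with hQ1'def
    set Q2' := Q2.transfer T3 hedges2 with hQ2'def
    refine ⟨Q1'.append (Walk.cons huvadj3.symm Q2'), ?_, ?_⟩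
    · rw [isPath_def, support_append, support_cons, List.tail_cons, List.nodup_append]
      refine ⟨?_, ?_, ?_⟩
      · rw [hQ1'def, support_transfer]; exact hQ1.support_nodup
      · rw [hQ2'def, support_transfer]; exact hQ2.support_nodup
      · intro y hy1 y' hy2 hyy
        subst hyy
        rw [hQ1'def, support_transfer] at hy1
        rw [hQ2'def, support_transfer] at hy2
        have h1 : IsAncestor T2 r y v := (mem_support_iff_anc h2 hQ1).1 hy1
        have h2' : y ∈ D := hQ2D y hy2
        exact hnc1 (anc_trans hc h2' h1)
    · rw [length_append, length_cons, hQ1'def, hQ2'def, length_transfer,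
        length_transfer, hQ1l, hQ2l]
      omega
  have hreach : ∀ x, T3.Reachable r x := by
    intro x
    by_cases hx : x ∈ D
    · obtain ⟨q, _, _⟩ := hpath2 x hx; exact ⟨q⟩
    · obtain ⟨q, _, _⟩ := hpath1 x hx; exact ⟨q⟩
  have hconn3 : T3.Connected := by
    rw [connected_iff]
    exact ⟨fun a b => ((hreach a).symm.trans (hreach b)), ⟨r⟩⟩
  have hbridge : T3.IsBridge s(u, v) := by
    rw [isBridge_iff_adj_and_forall_walk_mem_edges]
    refine fun q => ?_
    by_contra hq
    have hedges : ∀ e ∈ q.edges, e ∈ T2.edgeSet := by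
      intro e he
      have h1 : e ∈ E3 := hE3 ▸ q.edges_subset_edgeSet he
      rcases h1 with rfl | ⟨h1, _⟩
      · exact absurd he hq
      · exact h1
    have hqe : ∀ e ∈ q.edges, e ≠ s(p, u) := by
      intro e he
      have h1 : e ∈ E3 := hE3 ▸ q.edges_subset_edgeSet he
      rcases h1 with rfl | ⟨_, h1⟩
      · exact fun h => hne_e h.symm
      · exact h1
    have := hwalkD (q.transfer T2 hedges)
    rw [edges_transfer] at this
    exact hqe _ this rfl
  have hacyc : T3.IsAcyclic := by
    intro x c hcy
    by_cases he : s(u, v) ∈ c.edges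
    · have humem : u ∈ c.support := c.fst_mem_support_of_mem_edges he
      have hc2 : (c.rotate u humem).IsCycle := hcy.rotate humem
      have he2 : s(u, v) ∈ (c.rotate u humem).edges :=
        (c.rotate_edges u humem).perm.mem_iff.2 he
      exact hbridge.notMem_edges_of_isCycle hc2 he2
    · have hedges : ∀ e ∈ c.edges, e ∈ T2.edgeSet := by
        intro e hec
        have h1 : e ∈ E3 := hE3 ▸ c.edges_subset_edgeSet hec
        rcases h1 with rfl | ⟨h1, _⟩
        · exact absurd hec he
        · exact h1
      exact h2.IsAcyclic (c.transfer T2 hedges) (hcy.transfer hedges)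
  have htree3 : T3.IsTree := ⟨hconn3, hacyc⟩
  refine ⟨T3, p, hadj_up.symm, hpanc, hE3, htree3, ?_, ?_⟩
  · intro w hw
    obtain ⟨q, hq, hql⟩ := hpath1 w hw
    rw [← path_length htree3 hq, hql]
  · intro w hw
    obtain ⟨q, hq, hql⟩ := hpath2 w hw
    rw [← path_length htree3 hq, hql]

end Swap


/-- Let `G` be a finite connected simple graph, `H` a connected spanning subgraph of `G`,
`(T,r)` a DFS tree of `H`, and `k ≥ 1`. Suppose every edge of `G` not in `H` has both
endpoints in the descendant set of some vertex of depth exactly `k` in `(T,r)`. Then there is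
a DFS tree `(T*, r)` of `G` such that every vertex of depth at most `k` in `(T,r)` has the
same parent in `T*` as in `T` (where the parent of a vertex is its unique tree neighbor that
is a proper ancestor of it). -/
theorem stmt14 {V : Type*} [Fintype V] (G H T : SimpleGraph V) (r : V) (k : ℕ)
    (hk : 1 ≤ k) (hG : G.Connected) (hHG : H ≤ G) (hH : H.Connected)
    (hT : IsDFSTree H T r)
    (hcover : ∀ a b : V, G.Adj a b → ¬ H.Adj a b →
      ∃ v : V, T.dist r v = k ∧ IsAncestor T r v a ∧ IsAncestor T r v b) :
    ∃ T' : SimpleGraph V, IsDFSTree G T' r ∧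
      ∀ w : V, T.dist r w ≤ k → ∀ z : V,
        (T.Adj z w ∧ IsAncestor T r z w ∧ z ≠ w) ↔
        (T'.Adj z w ∧ IsAncestor T' r z w ∧ z ≠ w) := by
  classical
  obtain ⟨hTH, hTree, hDFS⟩ := hT
  have hTc := hTree.isConnected
  haveI : Finite (SimpleGraph V) :=
    Finite.of_injective SimpleGraph.Adj fun a b h => SimpleGraph.ext h
  set S : Set (SimpleGraph V) := {T2 | T2 ≤ G ∧ T2.IsTree ∧
    (∀ a b : V, T.Adj a b → T.dist r a ≤ k → T.dist r b ≤ k → T2.Adj a b) ∧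
    (∀ a b : V, T2.Adj a b → (T.Adj a b ∧ T.dist r a ≤ k ∧ T.dist r b ≤ k) ∨
       ∃ w, T.dist r w = k ∧ IsAncestor T r w a ∧ IsAncestor T r w b)} with hSdef
  have hTS : T ∈ S := by
    refine ⟨le_trans hTH hHG, hTree, fun a b hab _ _ => hab, ?_⟩
    intro a b hab
    rcases adj_parent hTree (r := r) hab with ⟨h1, hd1⟩ | ⟨h1, hd1⟩
    · by_cases hbk : T.dist r b ≤ k
      · exact Or.inl ⟨hab, by omega, hbk⟩
      · obtain ⟨w, hwk, hwa⟩ := exists_anc_at hTree (show k ≤ T.dist r a by omega)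
        exact Or.inr ⟨w, hwk, hwa, anc_trans hTc hwa h1⟩
    · by_cases hak : T.dist r a ≤ k
      · exact Or.inl ⟨hab, hak, by omega⟩
      · obtain ⟨w, hwk, hwb⟩ := exists_anc_at hTree (show k ≤ T.dist r b by omega)
        exact Or.inr ⟨w, hwk, anc_trans hTc hwb h1, hwb⟩
  obtain ⟨T2, hT2S, hmax⟩ := Set.Finite.exists_maximalFor
    (fun T2 : SimpleGraph V => ∑ w : V, T2.dist r w) S (Set.toFinite S) ⟨T, hTS⟩
  obtain ⟨hle2, h2tree, htop, hcls⟩ := hT2S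
  have h2c := h2tree.isConnected
  -- Claim B
  have hB : ∀ x, T.dist r x ≤ k → T2.dist r x = T.dist r x ∧
      ∀ z, (IsAncestor T2 r z x ↔ IsAncestor T r z x) := by
    intro x hx
    obtain ⟨P, hP, hPl⟩ := hTc.exists_path_of_dist r x
    have hedges : ∀ e ∈ P.edges, e ∈ T2.edgeSet := by
      intro e he
      induction e using Sym2.ind with
      | _ a b =>
        have hadjT : T.Adj a b := P.edges_subset_edgeSet he
        have ha := (mem_support_iff_anc hTree hP).1 (P.fst_mem_support_of_mem_edges he)
        have hb := (mem_support_iff_anc hTree hP).1 (P.snd_mem_support_of_mem_edges he)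
        exact T2.mem_edgeSet.2
          (htop a b hadjT (le_trans ha.dist_le hx) (le_trans hb.dist_le hx))
    have hP' := hP.transfer hedges
    constructor
    · rw [← path_length h2tree hP', length_transfer, hPl]
    · intro z
      rw [← mem_support_iff_anc h2tree hP', support_transfer,
        mem_support_iff_anc hTree hP]
  -- Claim D
  have hD : ∀ w y, T.dist r w = k → IsAncestor T r w y → IsAncestor T2 r w y := by
    intro w y hw hanc
    obtain ⟨P2, hP2, _⟩ := h2c.exists_path_of_dist r y
    have hyD : y ∈ {z | IsAncestor T r w z} := hanc
    have hrD : r ∉ {z | IsAncestor T r w z} := by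
      intro h
      have := h.dist_le
      rw [SimpleGraph.dist_self] at this
      omega
    obtain ⟨d, hd, hdf, hds⟩ := P2.reverse.exists_boundary_dart _ hyD hrD
    have hfst : d.fst = w := by
      rcases hcls d.fst d.snd d.adj with ⟨hTadj, hak, hbk⟩ | ⟨w', hw', hwa', hwb'⟩
      · have hwle := (hdf : IsAncestor T r w d.fst).dist_le
        exact (depth_unique hTree hdf anc_refl (by omega)).symm
      · have hww : w' = w := depth_unique hTree hwa' hdf (by omega)
        exact absurd (hww ▸ hwb') hds
    have hmem : w ∈ P2.support := by
      have := P2.reverse.dart_fst_mem_support_of_mem_darts hd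
      rw [hfst] at this
      rwa [support_reverse, List.mem_reverse] at this
    exact (mem_support_iff_anc h2tree hP2).1 hmem
  -- getting a deep covering vertex for an incomparable pair
  have hstep : ∀ a b, IsAncestor T r a b → ¬IsAncestor T2 r a b →
      ∃ w, T.dist r w = k ∧ IsAncestor T r w a ∧ IsAncestor T r w b := by
    intro a b hanc hn
    by_cases hbk : T.dist r b ≤ k
    · exact absurd (((hB b hbk).2 a).mpr hanc) hn
    · push_neg at hbk
      by_cases hak : k ≤ T.dist r a
      · obtain ⟨w, hwk, hwa⟩ := exists_anc_at hTree hak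
        exact ⟨w, hwk, hwa, anc_trans hTc hwa hanc⟩
      · push_neg at hak
        obtain ⟨w, hwk, hwb⟩ := exists_anc_at hTree (show k ≤ T.dist r b by omega)
        have haw : IsAncestor T r a w := anc_of_anc_le hTree hanc hwb (by omega)
        have h1 : IsAncestor T2 r a w := ((hB w (le_of_eq hwk)).2 a).mpr haw
        exact absurd (anc_trans h2c h1 (hD w b hwk hwb)) hn
  -- the swap step kills incomparable covered pairs
  have hswap : ∀ a b, G.Adj a b →
      (∃ w, T.dist r w = k ∧ IsAncestor T r w a ∧ IsAncestor T r w b) →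
      ¬IsAncestor T2 r a b → ¬IsAncestor T2 r b a →
      T2.dist r a ≤ T2.dist r b → False := by
    intro a b hab ⟨w, hwk, hwa, hwb⟩ hnc1 hnc2 hdle
    have haw : a ≠ w := by
      rintro rfl
      exact hnc1 (hD a b hwk hwb)
    have hadeep : k < T.dist r a := by
      have h1 := hwa.dist_le
      rcases Nat.lt_or_ge k (T.dist r a) with h | h
      · exact h
      · exact absurd (depth_unique hTree hwa anc_refl (by omega)).symm haw
    obtain ⟨T3, p, hpadj, hpanc, hE3, htree3, hdo, hdi⟩ :=
      swap_lemma h2tree hab.ne hnc1 hnc2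
    have hT3S : T3 ∈ S := by
      refine ⟨?_, htree3, ?_, ?_⟩
      · rw [← SimpleGraph.edgeSet_subset_edgeSet, hE3]
        rintro e (rfl | ⟨he, _⟩)
        · exact G.mem_edgeSet.2 hab
        · exact SimpleGraph.edgeSet_subset_edgeSet.2 hle2 he
      · intro a' b' hadj' ha' hb'
        have h1 : T2.Adj a' b' := htop a' b' hadj' ha' hb'
        rw [← SimpleGraph.mem_edgeSet, hE3]
        refine Set.mem_insert_of_mem _ ⟨h1, ?_⟩
        simp only [Set.mem_singleton_iff, Sym2.eq_iff]
        rintro (⟨rfl, rfl⟩ | ⟨rfl, rfl⟩)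
        · omega
        · omega
      · intro a' b' hadj'
        have h1 : s(a', b') ∈ T3.edgeSet := T3.mem_edgeSet.2 hadj'
        rw [hE3] at h1
        rcases h1 with h1 | ⟨h1, _⟩
        · rw [Sym2.eq_iff] at h1
          rcases h1 with ⟨rfl, rfl⟩ | ⟨rfl, rfl⟩
          · exact Or.inr ⟨w, hwk, hwa, hwb⟩
          · exact Or.inr ⟨w, hwk, hwb, hwa⟩
        · exact hcls a' b' (T2.mem_edgeSet.1 h1)
    have hsum : ∑ x : V, T2.dist r x < ∑ x : V, T3.dist r x := by
      apply Finset.sum_lt_sum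
      · intro i _
        by_cases hi : IsAncestor T2 r a i
        · rw [hdi i hi]
          have := hi
          unfold IsAncestor at this
          omega
        · rw [hdo i hi]
      · refine ⟨a, Finset.mem_univ a, ?_⟩
        rw [hdi a anc_refl, SimpleGraph.dist_self]
        omega
    have := hmax (j := T3) hT3S (le_of_lt hsum)
    simp only at this
    omega
  have hdfs : ∀ a b, G.Adj a b → TreeComparable T2 r a b := by
    intro a b hab
    by_contra hnc
    rw [TreeComparable, not_or] at hnc
    obtain ⟨hnc1, hnc2⟩ := hnc
    have hw : ∃ w, T.dist r w = k ∧ IsAncestor T r w a ∧ IsAncestor T r w b := by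
      by_cases hHab : H.Adj a b
      · rcases hDFS a b hHab with h | h
        · exact hstep a b h hnc1
        · obtain ⟨w, h1, h2, h3⟩ := hstep b a h hnc2
          exact ⟨w, h1, h3, h2⟩
      · exact hcover a b hab hHab
    rcases le_total (T2.dist r a) (T2.dist r b) with h | h
    · exact hswap a b hab hw hnc1 hnc2 h
    · obtain ⟨w, h1, h2, h3⟩ := hw
      exact hswap b a hab.symm ⟨w, h1, h3, h2⟩ hnc2 hnc1 h
  refine ⟨T2, ⟨hle2, h2tree, hdfs⟩, ?_⟩
  intro w hw z
  constructor
  · rintro ⟨hadj, hanc, hne⟩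
    have hdz : T.dist r w = T.dist r z + 1 := by
      rcases adj_parent hTree (r := r) hadj with ⟨_, hd⟩ | ⟨h1, _⟩
      · exact hd
      · exact absurd (anc_antisymm hTc hanc h1) hne
    exact ⟨htop z w hadj (by omega) hw, ((hB w hw).2 z).mpr hanc, hne⟩
  · rintro ⟨hadj, hanc, hne⟩
    have hancT : IsAncestor T r z w := ((hB w hw).2 z).mp hanc
    have hwr : w ≠ r := by
      rintro rfl
      apply hne
      apply anc_root_eq h2c hanc
    obtain ⟨p, hp1, hp2, hp3⟩ := exists_parent hTree hwr
    have hp2' : IsAncestor T2 r p w := ((hB w hw).2 p).mpr hp2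
    have hpadj2 : T2.Adj p w := htop p w hp1 (le_trans hp2.dist_le hw) hw
    have : z = p := parent_unique h2tree hadj hanc hne hpadj2 hp2' hp3
    subst this
    exact ⟨hp1, hancT, hne⟩
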